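/- There exists a recursive-definition-free λEH program that is typable in the simple (non-ATM) type system ⊢_ST but diverges: the program c = (with h_state handle (let f = λx. get () () in (set f; f ()))) (λx.()) — where h_state = {return x = λs.x, set x k = λs.k () x, get x k = λs.k s s} — is ⊢_ST-typable (with Σ(get) = unit → (unit→unit) and Σ(set) = (unit→unit) → unit) and its evaluation is non-terminating. -/

import Mathlib

namespace LEH

/-! ## Syntax of λEH (finitary PCF with effect handlers), extended with records,
    in de Bruijn representation.  A handler is represented by its return clause
    (one binder) and, for each operation name `o : ℕ`, an operation clause
    (two binders: the parameter `x` at index 1 and the continuation `k` at index 0). -/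

mutual
inductive Val : Type
| var (n : ℕ)
| unit
| tt
| ff
| lam (c : Comp)
| fix (v : Val)              -- rec x = v
| record (f : ℕ → Val)
inductive Comp : Type
| ret (v : Val)
| op (o : ℕ) (v : Val)
| app (v₁ v₂ : Val)
| ite (v : Val) (c₁ c₂ : Comp)
| letin (c₁ c₂ : Comp)
| handle (hret : Comp) (hops : ℕ → Comp) (c : Comp)
| proj (v : Val) (l : ℕ)
end

def liftR (ξ : ℕ → ℕ) : ℕ → ℕ
| 0 => 0
| n+1 => ξ n + 1

mutual
def renameV (ξ : ℕ → ℕ) : Val → Val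
| .var n => .var (ξ n)
| .unit => .unit
| .tt => .tt
| .ff => .ff
| .lam c => .lam (renameC (liftR ξ) c)
| .fix v => .fix (renameV (liftR ξ) v)
| .record f => .record (fun o => renameV ξ (f o))
def renameC (ξ : ℕ → ℕ) : Comp → Comp
| .ret v => .ret (renameV ξ v)
| .op o v => .op o (renameV ξ v)
| .app v₁ v₂ => .app (renameV ξ v₁) (renameV ξ v₂)
| .ite v c₁ c₂ => .ite (renameV ξ v) (renameC ξ c₁) (renameC ξ c₂)
| .letin c₁ c₂ => .letin (renameC ξ c₁) (renameC (liftR ξ) c₂)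
| .handle r ops c =>
    .handle (renameC (liftR ξ) r) (fun o => renameC (liftR (liftR ξ)) (ops o)) (renameC ξ c)
| .proj v l => .proj (renameV ξ v) l
end

def liftS (σ : ℕ → Val) : ℕ → Val
| 0 => .var 0
| n+1 => renameV Nat.succ (σ n)

mutual
def substV (σ : ℕ → Val) : Val → Val
| .var n => σ n
| .unit => .unit
| .tt => .tt
| .ff => .ff
| .lam c => .lam (substC (liftS σ) c)
| .fix v => .fix (substV (liftS σ) v)
| .record f => .record (fun o => substV σ (f o))
def substC (σ : ℕ → Val) : Comp → Comp
| .ret v => .ret (substV σ v)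
| .op o v => .op o (substV σ v)
| .app v₁ v₂ => .app (substV σ v₁) (substV σ v₂)
| .ite v c₁ c₂ => .ite (substV σ v) (substC σ c₁) (substC σ c₂)
| .letin c₁ c₂ => .letin (substC σ c₁) (substC (liftS σ) c₂)
| .handle r ops c =>
    .handle (substC (liftS σ) r) (fun o => substC (liftS (liftS σ)) (ops o)) (substC σ c)
| .proj v l => .proj (substV σ v) l
end

/-- substitution of a single value for de Bruijn index 0 -/
def sub1 (v : Val) : ℕ → Val
| 0 => v
| n+1 => .var n

/-- substitution of two values: index 1 ↦ `x` (operation parameter),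
    index 0 ↦ `k` (captured continuation) -/
def sub2 (x k : Val) : ℕ → Val
| 0 => k
| 1 => x
| n+2 => .var n

def subst1C (c : Comp) (v : Val) : Comp := substC (sub1 v) c
def subst1V (w : Val) (v : Val) : Val := substV (sub1 v) w

/-! ## Evaluation contexts and small-step operational semantics -/

inductive EC : Type
| hole
| letE (E : EC) (c : Comp)

def plug : EC → Comp → Comp
| .hole, c => c
| .letE E c₂, c => .letin (plug E c) c₂

def renameE (ξ : ℕ → ℕ) : EC → EC
| .hole => .hole
| .letE E c => .letE (renameE ξ E) (renameC (liftR ξ) c)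

/-- the captured delimited continuation `λ y. with h handle E[return y]` -/
def contOf (r : Comp) (ops : ℕ → Comp) (E : EC) : Val :=
  .lam (.handle (renameC (liftR Nat.succ) r)
    (fun o => renameC (liftR (liftR Nat.succ)) (ops o))
    (plug (renameE Nat.succ E) (.ret (.var 0))))

inductive Step : Comp → Comp → Prop
| letc {c₁ c₂ c} : Step c₁ c₂ → Step (.letin c₁ c) (.letin c₂ c)
| letret {v c} : Step (.letin (.ret v) c) (subst1C c v)
| lamapp {c v} : Step (.app (.lam c) v) (subst1C c v)
| fixapp {v v'} : Step (.app (.fix v) v') (.app (subst1V v (.fix v)) v')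
| iftrue {c₁ c₂} : Step (.ite .tt c₁ c₂) c₁
| iffalse {c₁ c₂} : Step (.ite .ff c₁ c₂) c₂
| han {r ops c c'} : Step c c' → Step (.handle r ops c) (.handle r ops c')
| hret {r ops v} : Step (.handle r ops (.ret v)) (subst1C r v)
| hop {r ops E o v} :
    Step (.handle r ops (plug E (.op o v)))
      (substC (sub2 v (contOf r ops E)) (ops o))
| projr {f l} : Step (.proj (.record f) l) (.ret (f l))

abbrev StepStar : Comp → Comp → Prop := Relation.ReflTransGen Step
abbrev StepPlus : Comp → Comp → Prop := Relation.TransGen Step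

/-! ## ATM types and subtyping -/

mutual
inductive VTy : Type
| unit
| bool
| arrow (τ : VTy) (ρ : CTy)
inductive CTy : Type
| pure (τ : VTy)
| eff (τ : VTy) (ρ₁ ρ₂ : CTy)
end

mutual
inductive SubV : VTy → VTy → Prop
| unit : SubV .unit .unit
| bool : SubV .bool .bool
| arrow {τ₁ τ₂ ρ₁ ρ₂} : SubV τ₂ τ₁ → SubC ρ₁ ρ₂ → SubV (.arrow τ₁ ρ₁) (.arrow τ₂ ρ₂)
inductive SubC : CTy → CTy → Prop
| pure {τ₁ τ₂} : SubV τ₁ τ₂ → SubC (.pure τ₁) (.pure τ₂)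
| ipure {τ₁ τ₂ ρ₁ ρ₂ ρ₁' ρ₂'} :
    SubV τ₁ τ₂ → SubC ρ₂ ρ₁ → SubC ρ₁' ρ₂' → SubC (.eff τ₁ ρ₁ ρ₁') (.eff τ₂ ρ₂ ρ₂')
| embed {τ₁ τ₂ ρ₁ ρ₂} : SubV τ₁ τ₂ → SubC ρ₁ ρ₂ → SubC (.pure τ₁) (.eff τ₂ ρ₁ ρ₂)
end

/-- An operation signature Σ: each operation `o` has type
    `arg o → res o / ans1 o ⇒ ans2 o`. -/
structure Sig where
  arg : ℕ → VTy
  res : ℕ → VTy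
  ans1 : ℕ → CTy
  ans2 : ℕ → CTy

/-! ## The ATM type system ⊢_ATM -/

mutual
inductive TV : Sig → List VTy → Val → VTy → Prop
| unit {S Γ} : TV S Γ .unit .unit
| tt {S Γ} : TV S Γ .tt .bool
| ff {S Γ} : TV S Γ .ff .bool
| var {S Γ n τ} : Γ[n]? = some τ → TV S Γ (.var n) τ
| lam {S Γ τ c ρ} : TC S (τ :: Γ) c ρ → TV S Γ (.lam c) (.arrow τ ρ)
| fix {S Γ τ v} : TV S (τ :: Γ) v τ → TV S Γ (.fix v) τ
| vsub {S Γ v τ τ'} : TV S Γ v τ → SubV τ τ' → TV S Γ v τ'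
inductive TC : Sig → List VTy → Comp → CTy → Prop
| ret {S Γ v τ} : TV S Γ v τ → TC S Γ (.ret v) (.pure τ)
| app {S Γ v₁ v₂ τ ρ} : TV S Γ v₁ (.arrow τ ρ) → TV S Γ v₂ τ → TC S Γ (.app v₁ v₂) ρ
| ite {S Γ v c₁ c₂ ρ} :
    TV S Γ v .bool → TC S Γ c₁ ρ → TC S Γ c₂ ρ → TC S Γ (.ite v c₁ c₂) ρ
| letP {S Γ c₁ c₂ τ₁ τ₂} :
    TC S Γ c₁ (.pure τ₁) → TC S (τ₁ :: Γ) c₂ (.pure τ₂) →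
    TC S Γ (.letin c₁ c₂) (.pure τ₂)
| letIp {S Γ c₁ c₂ τ₁ τ₂ ρ₁ ρ₁' ρ₂} :
    TC S Γ c₁ (.eff τ₁ ρ₁ ρ₁') → TC S (τ₁ :: Γ) c₂ (.eff τ₂ ρ₂ ρ₁) →
    TC S Γ (.letin c₁ c₂) (.eff τ₂ ρ₂ ρ₁')
| op {S Γ o v} : TV S Γ v (S.arg o) → TC S Γ (.op o v) (.eff (S.res o) (S.ans1 o) (S.ans2 o))
| handle {S Γ r ops c τ ρ ρ'} :
    (∀ o, TC S (.arrow (S.res o) (S.ans1 o) :: S.arg o :: Γ) (ops o) (S.ans2 o)) →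
    TC S (τ :: Γ) r ρ →
    TC S Γ c (.eff τ ρ ρ') →
    TC S Γ (.handle r ops c) ρ'
| csub {S Γ c ρ ρ'} : TC S Γ c ρ → SubC ρ ρ' → TC S Γ c ρ'
end

/-! ## Simple types and the simple type system ⊢_ST (on λEH with records).
    `STy.sig` is the record type `⟦Σ⟧`; the system is parametrized by an
    interpretation `I : ℕ → STy` of its fields and by an operation
    signature `SS`. -/

inductive STy : Type
| unit
| bool
| arrow (σ₁ σ₂ : STy)
| sig

structure SigS where
  arg : ℕ → STy
  res : ℕ → STy

mutual
inductive SV : (ℕ → STy) → SigS → List STy → Val → STy → Prop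
| unit {I SS Γ} : SV I SS Γ .unit .unit
| tt {I SS Γ} : SV I SS Γ .tt .bool
| ff {I SS Γ} : SV I SS Γ .ff .bool
| var {I SS Γ n σ} : Γ[n]? = some σ → SV I SS Γ (.var n) σ
| lam {I SS Γ σ c σ'} : SC I SS (σ :: Γ) c σ' → SV I SS Γ (.lam c) (.arrow σ σ')
| fix {I SS Γ σ v} : SV I SS (σ :: Γ) v σ → SV I SS Γ (.fix v) σ
| record {I SS Γ f} : (∀ o, SV I SS Γ (f o) (I o)) → SV I SS Γ (.record f) .sig
inductive SC : (ℕ → STy) → SigS → List STy → Comp → STy → Prop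
| ret {I SS Γ v σ} : SV I SS Γ v σ → SC I SS Γ (.ret v) σ
| app {I SS Γ v₁ v₂ σ σ'} :
    SV I SS Γ v₁ (.arrow σ σ') → SV I SS Γ v₂ σ → SC I SS Γ (.app v₁ v₂) σ'
| ite {I SS Γ v c₁ c₂ σ} :
    SV I SS Γ v .bool → SC I SS Γ c₁ σ → SC I SS Γ c₂ σ → SC I SS Γ (.ite v c₁ c₂) σ
| letin {I SS Γ c₁ c₂ σ σ'} :
    SC I SS Γ c₁ σ → SC I SS (σ :: Γ) c₂ σ' → SC I SS Γ (.letin c₁ c₂) σ'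
| op {I SS Γ o v} : SV I SS Γ v (SS.arg o) → SC I SS Γ (.op o v) (SS.res o)
| handle {I SS Γ r ops c σ σ'} :
    SC I SS (σ :: Γ) r σ' →
    (∀ o, SC I SS (.arrow (SS.res o) σ' :: SS.arg o :: Γ) (ops o) σ') →
    SC I SS Γ c σ →
    SC I SS Γ (.handle r ops c) σ'
| proj {I SS Γ v l} : SV I SS Γ v .sig → SC I SS Γ (.proj v l) (I l)
end

/-! ## Derivation trees (Type-valued) for subtyping and ATM typing,
    used by the typing-derivation-directed CPS transformation -/

mutual
inductive SubVD : VTy → VTy → Type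
| unit : SubVD .unit .unit
| bool : SubVD .bool .bool
| arrow {τ₁ τ₂ ρ₁ ρ₂} : SubVD τ₂ τ₁ → SubCD ρ₁ ρ₂ → SubVD (.arrow τ₁ ρ₁) (.arrow τ₂ ρ₂)
inductive SubCD : CTy → CTy → Type
| pure {τ₁ τ₂} : SubVD τ₁ τ₂ → SubCD (.pure τ₁) (.pure τ₂)
| ipure {τ₁ τ₂ ρ₁ ρ₂ ρ₁' ρ₂'} :
    SubVD τ₁ τ₂ → SubCD ρ₂ ρ₁ → SubCD ρ₁' ρ₂' → SubCD (.eff τ₁ ρ₁ ρ₁') (.eff τ₂ ρ₂ ρ₂')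
| embed {τ₁ τ₂ ρ₁ ρ₂} : SubVD τ₁ τ₂ → SubCD ρ₁ ρ₂ → SubCD (.pure τ₁) (.eff τ₂ ρ₁ ρ₂)
end

mutual
inductive TVD : Sig → List VTy → Val → VTy → Type
| unit {S Γ} : TVD S Γ .unit .unit
| tt {S Γ} : TVD S Γ .tt .bool
| ff {S Γ} : TVD S Γ .ff .bool
| var {S Γ τ} (n : ℕ) : Γ[n]? = some τ → TVD S Γ (.var n) τ
| lam {S Γ τ c ρ} : TCD S (τ :: Γ) c ρ → TVD S Γ (.lam c) (.arrow τ ρ)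
| fix {S Γ τ v} : TVD S (τ :: Γ) v τ → TVD S Γ (.fix v) τ
| vsub {S Γ v τ τ'} : TVD S Γ v τ → SubVD τ τ' → TVD S Γ v τ'
inductive TCD : Sig → List VTy → Comp → CTy → Type
| ret {S Γ v τ} : TVD S Γ v τ → TCD S Γ (.ret v) (.pure τ)
| app {S Γ v₁ v₂ τ ρ} : TVD S Γ v₁ (.arrow τ ρ) → TVD S Γ v₂ τ → TCD S Γ (.app v₁ v₂) ρ
| ite {S Γ v c₁ c₂ ρ} :
    TVD S Γ v .bool → TCD S Γ c₁ ρ → TCD S Γ c₂ ρ → TCD S Γ (.ite v c₁ c₂) ρ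
| letP {S Γ c₁ c₂ τ₁ τ₂} :
    TCD S Γ c₁ (.pure τ₁) → TCD S (τ₁ :: Γ) c₂ (.pure τ₂) →
    TCD S Γ (.letin c₁ c₂) (.pure τ₂)
| letIp {S Γ c₁ c₂ τ₁ τ₂ ρ₁ ρ₁' ρ₂} :
    TCD S Γ c₁ (.eff τ₁ ρ₁ ρ₁') → TCD S (τ₁ :: Γ) c₂ (.eff τ₂ ρ₂ ρ₁) →
    TCD S Γ (.letin c₁ c₂) (.eff τ₂ ρ₂ ρ₁')
| op {S Γ} (o : ℕ) {v} :
    TVD S Γ v (S.arg o) → TCD S Γ (.op o v) (.eff (S.res o) (S.ans1 o) (S.ans2 o))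
| handle {S Γ r ops c τ ρ ρ'} :
    (∀ o, TCD S (.arrow (S.res o) (S.ans1 o) :: S.arg o :: Γ) (ops o) (S.ans2 o)) →
    TCD S (τ :: Γ) r ρ →
    TCD S Γ c (.eff τ ρ ρ') →
    TCD S Γ (.handle r ops c) ρ'
| csub {S Γ c ρ ρ'} : TCD S Γ c ρ → SubCD ρ ρ' → TCD S Γ c ρ'
end

/-! ## The CPS transformation -/

/-! CPS transformation of ATM value and computation types into simple types;
    `⟦τ/ρ₁⇒ρ₂⟧ = ⟦Σ⟧ → (⟦τ⟧ → ⟦ρ₁⟧) → ⟦ρ₂⟧`, where `⟦Σ⟧` is `STy.sig`. -/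
mutual
def cpsT : VTy → STy
| .unit => .unit
| .bool => .bool
| .arrow τ ρ => .arrow (cpsT τ) (cpsCT ρ)
def cpsCT : CTy → STy
| .pure τ => cpsT τ
| .eff τ ρ₁ ρ₂ => .arrow .sig (.arrow (.arrow (cpsT τ) (cpsCT ρ₁)) (cpsCT ρ₂))
end

/-- the field types of the record type `⟦Σ⟧` -/
def opSTy (S : Sig) : ℕ → STy := fun o =>
  .arrow (cpsT (S.arg o)) (.arrow (.arrow (cpsT (S.res o)) (cpsCT (S.ans1 o))) (cpsCT (S.ans2 o)))

/-- application of a computation to a computation (left-to-right sequencing sugar) -/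
def apc (c₁ c₂ : Comp) : Comp :=
  .letin c₁ (.letin (renameC Nat.succ c₂) (.app (.var 1) (.var 0)))

/-! CPS transformation of subtyping derivations, given as the coercion
    they induce on (already-transformed) terms; the static applications `@`
    of the paper are performed on the fly. -/
mutual
def coerceV : {τ τ' : VTy} → SubVD τ τ' → Val → Val
| _, _, .unit, v => v
| _, _, .bool, v => v
| _, _, .arrow d21 d12, f =>
    .lam (coerceC d12 (.app (renameV Nat.succ f) (coerceV d21 (.var 0))))
def coerceC : {ρ ρ' : CTy} → SubCD ρ ρ' → Comp → Comp
| _, _, .pure d, c => .letin c (.ret (coerceV d (.var 0)))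
| _, _, .ipure dT d21 d12, c =>
    .ret (.lam (.ret (.lam (coerceC d12
      (apc (apc (renameC (fun n => n + 2) c) (.ret (.var 1)))
        (.ret (.lam (coerceC d21 (apc (.ret (.var 1)) (.ret (coerceV dT (.var 0))))))))))))
| _, _, .embed dT dR, c =>
    .ret (.lam (.ret (.lam (coerceC dR
      (.letin (renameC (fun n => n + 2) c)
        (apc (.ret (.var 1)) (.ret (coerceV dT (.var 0)))))))))
end

/-! the typing-derivation-directed CPS transformation -/
mutual
def cpsV {S : Sig} : {Γ : List VTy} → {v : Val} → {τ : VTy} → TVD S Γ v τ → Val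
| _, _, _, .unit => .unit
| _, _, _, .tt => .tt
| _, _, _, .ff => .ff
| _, _, _, .var n _ => .var n
| _, _, _, .lam D => .lam (cpsC D)
| _, _, _, .fix D => .fix (cpsV D)
| _, _, _, .vsub D d => coerceV d (cpsV D)
def cpsC {S : Sig} : {Γ : List VTy} → {c : Comp} → {ρ : CTy} → TCD S Γ c ρ → Comp
| _, _, _, .ret D => .ret (cpsV D)
| _, _, _, .app D₁ D₂ => .app (cpsV D₁) (cpsV D₂)
| _, _, _, .ite Dv D₁ D₂ => .ite (cpsV Dv) (cpsC D₁) (cpsC D₂)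
| _, _, _, .letP D₁ D₂ => .letin (cpsC D₁) (cpsC D₂)
| _, _, _, .letIp D₁ D₂ =>
    .ret (.lam (.ret (.lam (apc (apc (renameC (fun n => n + 2) (cpsC D₁)) (.ret (.var 1)))
      (.ret (.lam (apc (apc (renameC (liftR (fun n => n + 2)) (cpsC D₂)) (.ret (.var 2)))
        (.ret (.var 1)))))))))
| _, _, _, .op o Dv =>
    .ret (.lam (.ret (.lam (apc (apc (.proj (.var 1) o)
      (.ret (renameV (fun n => n + 2) (cpsV Dv)))) (.ret (.var 0))))))
| _, _, _, .handle Dops Dret Dc =>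
    apc (apc (cpsC Dc) (.ret (.record (fun o => .lam (.ret (.lam (cpsC (Dops o))))))))
      (.ret (.lam (cpsC Dret)))
| _, _, _, .csub D d => coerceC d (cpsC D)
end

/-- `⟦D⟧ v_h v_k`: applying a CPS-transformed effectful computation to a
    (translated) handler record and continuation -/
def capp2 (c : Comp) (vh vk : Val) : Comp := apc (apc c (.ret vh)) (.ret vk)

/-! ## Effect-handler-freeness and rec-freeness -/

mutual
def hfV : Val → Prop
| .var _ => True
| .unit => True
| .tt => True
| .ff => True
| .lam c => hfC c
| .fix v => hfV v
| .record f => ∀ o, hfV (f o)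
def hfC : Comp → Prop
| .ret v => hfV v
| .op _ _ => False
| .app v₁ v₂ => hfV v₁ ∧ hfV v₂
| .ite v c₁ c₂ => hfV v ∧ hfC c₁ ∧ hfC c₂
| .letin c₁ c₂ => hfC c₁ ∧ hfC c₂
| .handle _ _ _ => False
| .proj v _ => hfV v
end

mutual
def recFreeV : Val → Prop
| .var _ => True
| .unit => True
| .tt => True
| .ff => True
| .lam c => recFreeC c
| .fix _ => False
| .record f => ∀ o, recFreeV (f o)
def recFreeC : Comp → Prop
| .ret v => recFreeV v
| .op _ v => recFreeV v
| .app v₁ v₂ => recFreeV v₁ ∧ recFreeV v₂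
| .ite v c₁ c₂ => recFreeV v ∧ recFreeC c₁ ∧ recFreeC c₂
| .letin c₁ c₂ => recFreeC c₁ ∧ recFreeC c₂
| .handle r ops c => recFreeC r ∧ (∀ o, recFreeC (ops o)) ∧ recFreeC c
| .proj v _ => recFreeV v
end

end LEH

namespace LEH

def sigmaT : STy := STy.arrow .unit .unit

/-- return clause of the state handler: `return x = λs.x` -/
def hstateRet : Comp := .ret (.lam (.ret (.var 1)))

/-- operation clauses of the state handler: `get x k = λs.k s s` (op 0) and
    `set x k = λs.k () x` (op 1); other (unused) operations get a trivial
    clause of the answer type. -/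
def hstateOps : ℕ → Comp := fun o =>
  if o = 0 then
    .ret (.lam (.letin (.app (.var 1) (.var 0)) (.app (.var 0) (.var 1))))
  else if o = 1 then
    .ret (.lam (.letin (.app (.var 1) .unit) (.app (.var 0) (.var 3))))
  else .ret (.lam (.ret .unit))

/-- `λx. get () ()` -/
def vF : Val := .lam (.letin (.op 0 .unit) (.app (.var 0) .unit))

/-- `(with h_state handle (let f = λx. get () () in (set f; f ()))) (λx.())` -/
def cex5 : Comp :=
  .letin (.handle hstateRet hstateOps
      (.letin (.ret vF) (.letin (.op 1 (.var 0)) (.app (.var 1) .unit))))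
    (.app (.var 0) (.lam (.ret .unit)))

/-- the simple-type signature: `get : unit → (unit→unit)`, `set : (unit→unit) → unit` -/
def SS16 : SigS :=
  ⟨fun o => if o = 0 then .unit else if o = 1 then sigmaT else .unit,
   fun o => if o = 0 then sigmaT else .unit⟩

def vid : Val := .lam (.ret .unit)
def K0 : Comp := .app (.var 0) vid
def KA : Comp := .app (.var 0) vF

def k1 : Val := .lam (.handle hstateRet hstateOps (.letin (.ret (.var 0)) (.app vF .unit)))
def k2 : Val := .lam (.handle hstateRet hstateOps (.letin (.ret (.var 0)) (.app (.var 0) .unit)))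
def w1 : Val := .lam (.letin (.app k1 .unit) (.app (.var 0) vF))
def w2 : Val := .lam (.letin (.app k2 (.var 0)) (.app (.var 0) (.var 1)))

lemma ren_hops (ξ : ℕ → ℕ) : (fun o => renameC (liftR (liftR ξ)) (hstateOps o)) = hstateOps := by
  funext o; rcases o with _|_|o <;> rfl

lemma ren_hret (ξ : ℕ → ℕ) : renameC (liftR ξ) hstateRet = hstateRet := rfl

lemma sub_hops (σ : ℕ → Val) : (fun o => substC (liftS (liftS σ)) (hstateOps o)) = hstateOps := by
  funext o; rcases o with _|_|o <;> rfl

lemma sub_hret (σ : ℕ → Val) : substC (liftS σ) hstateRet = hstateRet := rfl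

lemma ren_vF (ξ : ℕ → ℕ) : renameV ξ vF = vF := rfl
lemma sub_vF (σ : ℕ → Val) : substV σ vF = vF := rfl

lemma ren_k1 (ξ : ℕ → ℕ) : renameV ξ k1 = k1 := by
  show Val.lam (Comp.handle (renameC (liftR (liftR ξ)) hstateRet)
    (fun o => renameC (liftR (liftR (liftR ξ))) (hstateOps o)) _) = k1
  rw [ren_hret, ren_hops]; rfl

lemma ren_k2 (ξ : ℕ → ℕ) : renameV ξ k2 = k2 := by
  show Val.lam (Comp.handle (renameC (liftR (liftR ξ)) hstateRet)
    (fun o => renameC (liftR (liftR (liftR ξ))) (hstateOps o)) _) = k2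
  rw [ren_hret, ren_hops]; rfl

lemma sub_k1 (σ : ℕ → Val) : substV σ k1 = k1 := by
  show Val.lam (Comp.handle (substC (liftS (liftS σ)) hstateRet)
    (fun o => substC (liftS (liftS (liftS σ))) (hstateOps o)) _) = k1
  rw [sub_hret, sub_hops]; rfl

lemma sub_k2 (σ : ℕ → Val) : substV σ k2 = k2 := by
  show Val.lam (Comp.handle (substC (liftS (liftS σ)) hstateRet)
    (fun o => substC (liftS (liftS (liftS σ))) (hstateOps o)) _) = k2
  rw [sub_hret, sub_hops]; rfl

lemma contOf_eq (E : EC) : contOf hstateRet hstateOps E =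
    .lam (.handle hstateRet hstateOps (plug (renameE Nat.succ E) (.ret (.var 0)))) := by
  unfold contOf; rw [ren_hret, ren_hops]

lemma cont1_eq : contOf hstateRet hstateOps (.letE .hole (.app vF .unit)) = k1 := by
  rw [contOf_eq]; rfl

lemma cont2_eq : contOf hstateRet hstateOps (.letE .hole (.app (.var 0) .unit)) = k2 := by
  rw [contOf_eq]; rfl

lemma hop1_eq : substC (sub2 vF (contOf hstateRet hstateOps (.letE .hole (.app vF .unit)))) (hstateOps 1)
    = .ret w1 := by
  rw [cont1_eq]
  show Comp.ret (.lam (.letin (.app (renameV Nat.succ k1) .unit)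
    (.app (.var 0) (renameV Nat.succ (renameV Nat.succ vF))))) = _
  rw [ren_k1, ren_vF, ren_vF]; rfl

lemma hop2_eq : substC (sub2 .unit (contOf hstateRet hstateOps (.letE .hole (.app (.var 0) .unit)))) (hstateOps 0)
    = .ret w2 := by
  rw [cont2_eq]
  show Comp.ret (.lam (.letin (.app (renameV Nat.succ k2) (.var 0))
    (.app (.var 0) (.var 1)))) = _
  rw [ren_k2]; rfl


def X1 : Comp := .letin (.handle hstateRet hstateOps (.letin (.op 1 vF) (.app vF .unit))) K0
def X2 : Comp := .letin (.ret w1) K0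
def X3 : Comp := .app w1 vid
def X4 : Comp := .letin (.app k1 .unit) KA
def X5 : Comp := .letin (.handle hstateRet hstateOps (.letin (.ret .unit) (.app vF .unit))) KA
def stA : Comp := .letin (.handle hstateRet hstateOps (.app vF .unit)) KA
def stB : Comp := .letin (.handle hstateRet hstateOps (.letin (.op 0 .unit) (.app (.var 0) .unit))) KA
def stC : Comp := .letin (.ret w2) KA
def stD : Comp := .app w2 vF
def stE : Comp := .letin (.app k2 vF) KA
def stF : Comp := .letin (.handle hstateRet hstateOps (.letin (.ret vF) (.app (.var 0) .unit))) KA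



lemma ret_inv {v c'} (h : Step (.ret v) c') : False := by nomatch h
lemma op_inv {o v c'} (h : Step (.op o v) c') : False := by nomatch h

lemma letin_inv {c₁ c₂ c'} (h : Step (.letin c₁ c₂) c') :
    (∃ c₁', Step c₁ c₁' ∧ c' = .letin c₁' c₂) ∨ (∃ v, c₁ = .ret v ∧ c' = subst1C c₂ v) := by
  cases h with
  | letc h1 => exact Or.inl ⟨_, h1, rfl⟩
  | letret => exact Or.inr ⟨_, rfl, rfl⟩

lemma app_inv {v₁ v₂ c'} (h : Step (.app v₁ v₂) c') :
    (∃ b, v₁ = .lam b ∧ c' = subst1C b v₂) ∨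
    (∃ w, v₁ = .fix w ∧ c' = .app (subst1V w (.fix w)) v₂) := by
  cases h with
  | lamapp => exact Or.inl ⟨_, rfl, rfl⟩
  | fixapp => exact Or.inr ⟨_, rfl, rfl⟩

lemma handle_inv {r ops c₀ c'} (h : Step (.handle r ops c₀) c') :
    (∃ c₂, Step c₀ c₂ ∧ c' = .handle r ops c₂) ∨
    (∃ v, c₀ = .ret v ∧ c' = subst1C r v) ∨
    (∃ E o v, c₀ = plug E (.op o v) ∧ c' = substC (sub2 v (contOf r ops E)) (ops o)) := by
  generalize hd : Comp.handle r ops c₀ = d at h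
  cases h with
  | letc h1 => exact Comp.noConfusion hd
  | letret => exact Comp.noConfusion hd
  | lamapp => exact Comp.noConfusion hd
  | fixapp => exact Comp.noConfusion hd
  | iftrue => exact Comp.noConfusion hd
  | iffalse => exact Comp.noConfusion hd
  | projr => exact Comp.noConfusion hd
  | han h1 =>
    injection hd with e1 e2 e3
    subst e1; subst e2; subst e3
    exact Or.inl ⟨_, h1, rfl⟩
  | hret =>
    injection hd with e1 e2 e3
    subst e1; subst e2; subst e3
    exact Or.inr (Or.inl ⟨_, rfl, rfl⟩)
  | hop =>
    injection hd with e1 e2 e3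
    subst e1; subst e2; subst e3
    exact Or.inr (Or.inr ⟨_, _, _, rfl, rfl⟩)


lemma inv_cex5 {c'} (h : Step cex5 c') : c' = X1 := by
  rcases letin_inv h with ⟨c₂, h1, rfl⟩ | ⟨v, hv, _⟩
  · rcases handle_inv h1 with ⟨c₃, h2, rfl⟩ | ⟨v, hv, _⟩ | ⟨E, o, v, hE, rfl⟩
    · rcases letin_inv h2 with ⟨c₄, h3, rfl⟩ | ⟨v, hv, rfl⟩
      · exact absurd h3 ret_inv
      · injection hv with hv; subst hv; rfl
    · exact Comp.noConfusion hv
    · cases E with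
      | hole => exact Comp.noConfusion hE
      | letE E₂ c₂ =>
        simp only [plug] at hE
        injection hE with e1 e2
        cases E₂ with
        | hole => exact Comp.noConfusion e1
        | letE E₃ c₃ => exact Comp.noConfusion e1
  · exact Comp.noConfusion hv

lemma inv_X1 {c'} (h : Step X1 c') : c' = X2 := by
  rcases letin_inv h with ⟨c₂, h1, rfl⟩ | ⟨v, hv, _⟩
  · rcases handle_inv h1 with ⟨c₃, h2, rfl⟩ | ⟨v, hv, _⟩ | ⟨E, o, v, hE, rfl⟩
    · rcases letin_inv h2 with ⟨c₄, h3, rfl⟩ | ⟨v, hv, rfl⟩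
      · exact absurd h3 op_inv
      · exact Comp.noConfusion hv
    · exact Comp.noConfusion hv
    · cases E with
      | hole => exact Comp.noConfusion hE
      | letE E₂ c₂ =>
        simp only [plug] at hE
        injection hE with e1 e2
        cases E₂ with
        | hole =>
          simp only [plug] at e1
          injection e1 with eo ev
          subst eo; subst ev; subst e2
          rw [hop1_eq]; rfl
        | letE E₃ c₃ => exact Comp.noConfusion e1
  · exact Comp.noConfusion hv

lemma inv_X2 {c'} (h : Step X2 c') : c' = X3 := by
  rcases letin_inv h with ⟨c₂, h1, rfl⟩ | ⟨v, hv, rfl⟩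
  · exact absurd h1 ret_inv
  · injection hv with hv; subst hv; rfl

lemma inv_X3 {c'} (h : Step X3 c') : c' = X4 := by
  rcases app_inv h with ⟨b, hb, rfl⟩ | ⟨w, hw, _⟩
  · rw [show w1 = Val.lam (.letin (.app k1 .unit) (.app (.var 0) vF)) from rfl] at hb
    injection hb with hb; subst hb
    show Comp.letin (.app (substV (sub1 vid) k1) .unit) (.app (.var 0) (substV (liftS (sub1 vid)) vF)) = X4
    rw [sub_k1, sub_vF]; rfl
  · exact Val.noConfusion (show Val.lam _ = Val.fix w from hw)

lemma inv_X4 {c'} (h : Step X4 c') : c' = X5 := by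
  rcases letin_inv h with ⟨c₂, h1, rfl⟩ | ⟨v, hv, _⟩
  · rcases app_inv h1 with ⟨b, hb, rfl⟩ | ⟨w, hw, _⟩
    · rw [show k1 = Val.lam (.handle hstateRet hstateOps (.letin (.ret (.var 0)) (.app vF .unit))) from rfl] at hb
      injection hb with hb; subst hb
      show Comp.letin (Comp.handle (substC (liftS (sub1 .unit)) hstateRet)
        (fun o => substC (liftS (liftS (sub1 .unit))) (hstateOps o))
        (.letin (.ret .unit) (substC (liftS (sub1 .unit)) (.app vF .unit)))) KA = X5
      rw [sub_hret, sub_hops]; rfl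
    · exact Val.noConfusion (show Val.lam _ = Val.fix w from hw)
  · exact Comp.noConfusion hv

lemma inv_X5 {c'} (h : Step X5 c') : c' = stA := by
  rcases letin_inv h with ⟨c₂, h1, rfl⟩ | ⟨v, hv, _⟩
  · rcases handle_inv h1 with ⟨c₃, h2, rfl⟩ | ⟨v, hv, _⟩ | ⟨E, o, v, hE, rfl⟩
    · rcases letin_inv h2 with ⟨c₄, h3, rfl⟩ | ⟨v, hv, rfl⟩
      · exact absurd h3 ret_inv
      · injection hv with hv; subst hv; rfl
    · exact Comp.noConfusion hv
    · cases E with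
      | hole => exact Comp.noConfusion hE
      | letE E₂ c₂ =>
        simp only [plug] at hE
        injection hE with e1 e2
        cases E₂ with
        | hole => exact Comp.noConfusion e1
        | letE E₃ c₃ => exact Comp.noConfusion e1
  · exact Comp.noConfusion hv

lemma inv_stA {c'} (h : Step stA c') : c' = stB := by
  rcases letin_inv h with ⟨c₂, h1, rfl⟩ | ⟨v, hv, _⟩
  · rcases handle_inv h1 with ⟨c₃, h2, rfl⟩ | ⟨v, hv, _⟩ | ⟨E, o, v, hE, rfl⟩
    · rcases app_inv h2 with ⟨b, hb, rfl⟩ | ⟨w, hw, _⟩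
      · rw [show vF = Val.lam (.letin (.op 0 .unit) (.app (.var 0) .unit)) from rfl] at hb
        injection hb with hb; subst hb; rfl
      · exact Val.noConfusion (show Val.lam _ = Val.fix w from hw)
    · exact Comp.noConfusion hv
    · cases E with
      | hole => exact Comp.noConfusion hE
      | letE E₂ c₂ => exact Comp.noConfusion hE
  · exact Comp.noConfusion hv

lemma inv_stB {c'} (h : Step stB c') : c' = stC := by
  rcases letin_inv h with ⟨c₂, h1, rfl⟩ | ⟨v, hv, _⟩
  · rcases handle_inv h1 with ⟨c₃, h2, rfl⟩ | ⟨v, hv, _⟩ | ⟨E, o, v, hE, rfl⟩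
    · rcases letin_inv h2 with ⟨c₄, h3, rfl⟩ | ⟨v, hv, rfl⟩
      · exact absurd h3 op_inv
      · exact Comp.noConfusion hv
    · exact Comp.noConfusion hv
    · cases E with
      | hole => exact Comp.noConfusion hE
      | letE E₂ c₂ =>
        simp only [plug] at hE
        injection hE with e1 e2
        cases E₂ with
        | hole =>
          simp only [plug] at e1
          injection e1 with eo ev
          subst eo; subst ev; subst e2
          rw [hop2_eq]; rfl
        | letE E₃ c₃ => exact Comp.noConfusion e1
  · exact Comp.noConfusion hv

lemma inv_stC {c'} (h : Step stC c') : c' = stD := by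
  rcases letin_inv h with ⟨c₂, h1, rfl⟩ | ⟨v, hv, rfl⟩
  · exact absurd h1 ret_inv
  · injection hv with hv; subst hv; rfl

lemma inv_stD {c'} (h : Step stD c') : c' = stE := by
  rcases app_inv h with ⟨b, hb, rfl⟩ | ⟨w, hw, _⟩
  · rw [show w2 = Val.lam (.letin (.app k2 (.var 0)) (.app (.var 0) (.var 1))) from rfl] at hb
    injection hb with hb; subst hb
    show Comp.letin (.app (substV (sub1 vF) k2) vF) (.app (.var 0) (renameV Nat.succ vF)) = stE
    rw [sub_k2, ren_vF]; rfl
  · exact Val.noConfusion (show Val.lam _ = Val.fix w from hw)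

lemma inv_stE {c'} (h : Step stE c') : c' = stF := by
  rcases letin_inv h with ⟨c₂, h1, rfl⟩ | ⟨v, hv, _⟩
  · rcases app_inv h1 with ⟨b, hb, rfl⟩ | ⟨w, hw, _⟩
    · rw [show k2 = Val.lam (.handle hstateRet hstateOps (.letin (.ret (.var 0)) (.app (.var 0) .unit))) from rfl] at hb
      injection hb with hb; subst hb
      show Comp.letin (Comp.handle (substC (liftS (sub1 vF)) hstateRet)
        (fun o => substC (liftS (liftS (sub1 vF))) (hstateOps o))
        (.letin (.ret vF) (.app (.var 0) .unit))) KA = stF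
      rw [sub_hret, sub_hops]; rfl
    · exact Val.noConfusion (show Val.lam _ = Val.fix w from hw)
  · exact Comp.noConfusion hv

lemma inv_stF {c'} (h : Step stF c') : c' = stA := by
  rcases letin_inv h with ⟨c₂, h1, rfl⟩ | ⟨v, hv, _⟩
  · rcases handle_inv h1 with ⟨c₃, h2, rfl⟩ | ⟨v, hv, _⟩ | ⟨E, o, v, hE, rfl⟩
    · rcases letin_inv h2 with ⟨c₄, h3, rfl⟩ | ⟨v, hv, rfl⟩
      · exact absurd h3 ret_inv
      · injection hv with hv; subst hv; rfl
    · exact Comp.noConfusion hv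
    · cases E with
      | hole => exact Comp.noConfusion hE
      | letE E₂ c₂ =>
        simp only [plug] at hE
        injection hE with e1 e2
        cases E₂ with
        | hole => exact Comp.noConfusion e1
        | letE E₃ c₃ => exact Comp.noConfusion e1
  · exact Comp.noConfusion hv


def Inv (c : Comp) : Prop :=
  c = cex5 ∨ c = X1 ∨ c = X2 ∨ c = X3 ∨ c = X4 ∨ c = X5 ∨
  c = stA ∨ c = stB ∨ c = stC ∨ c = stD ∨ c = stE ∨ c = stF

lemma inv_closed {c c'} (hc : Inv c) (h : Step c c') : Inv c' := by
  unfold Inv at *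
  rcases hc with rfl|rfl|rfl|rfl|rfl|rfl|rfl|rfl|rfl|rfl|rfl|rfl
  · rw [inv_cex5 h]; tauto
  · rw [inv_X1 h]; tauto
  · rw [inv_X2 h]; tauto
  · rw [inv_X3 h]; tauto
  · rw [inv_X4 h]; tauto
  · rw [inv_X5 h]; tauto
  · rw [inv_stA h]; tauto
  · rw [inv_stB h]; tauto
  · rw [inv_stC h]; tauto
  · rw [inv_stD h]; tauto
  · rw [inv_stE h]; tauto
  · rw [inv_stF h]; tauto

lemma reach_inv : ∀ {c}, StepStar cex5 c → Inv c := by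
  intro c h
  induction h with
  | refl => left; rfl
  | tail _ h2 ih => exact inv_closed ih h2

lemma recFree_hops : ∀ o, recFreeC (hstateOps o) := by
  intro o; rcases o with _|_|o <;> simp [hstateOps, recFreeC, recFreeV]

lemma hvF : ∀ Γ, SV (fun _ => STy.unit) SS16 Γ vF sigmaT := by
  intro Γ
  exact SV.lam (SC.letin (SC.op SV.unit) (SC.app (SV.var rfl) SV.unit))

lemma ty_cex5 : SC (fun _ => STy.unit) SS16 [] cex5 STy.unit := by
  refine SC.letin (σ := STy.arrow sigmaT .unit) (SC.handle (σ := STy.unit) ?_ ?_ ?_)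
    (SC.app (SV.var rfl) (SV.lam (SC.ret SV.unit)))
  · exact SC.ret (SV.lam (SC.ret (SV.var rfl)))
  · intro o
    rcases o with _|_|o
    · exact SC.ret (SV.lam (SC.letin (SC.app (SV.var rfl) (SV.var rfl))
        (SC.app (SV.var rfl) (SV.var rfl))))
    · exact SC.ret (SV.lam (SC.letin (SC.app (SV.var rfl) SV.unit)
        (SC.app (SV.var rfl) (SV.var rfl))))
    · exact SC.ret (SV.lam (σ := sigmaT) (SC.ret SV.unit))
  · exact SC.letin (SC.ret (hvF _)) (SC.letin (SC.op (SV.var rfl))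
      (SC.app (SV.var rfl) SV.unit))

/-- `cex5` is a recursive-definition-free program that is `⊢_ST`-typable but
    diverges. -/
theorem cex5_st_typable_and_diverges :
    recFreeC cex5 ∧
    SC (fun _ => STy.unit) SS16 [] cex5 STy.unit ∧
    ¬ ∃ v, StepStar cex5 (Comp.ret v) := by
  refine ⟨?_, ty_cex5, ?_⟩
  · simp [cex5, recFreeC, recFreeV, hstateRet, vF, recFree_hops]
  · rintro ⟨v, h⟩
    have hi := reach_inv h
    rcases hi with h'|h'|h'|h'|h'|h'|h'|h'|h'|h'|h'|h' <;>
      simp [cex5, X1, X2, X3, X4, X5, stA, stB, stC, stD, stE, stF] at h'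

end LEH
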